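/- Let n ≥ 2. Let tₙ be the ℚ-Lie algebra with generators t_{ij} (1 ≤ i ≠ j ≤ n) and relations t_{ji} = t_{ij}, [t_{ij}, t_{ik} + t_{jk}] = 0 for i,j,k distinct, and [t_{ij}, t_{kl}] = 0 for i,j,k,l distinct. Let t_{1,n} be the ℚ-Lie algebra with generators x_i⁺, x_i⁻ (1 ≤ i ≤ n) and relations: Σᵢ x_i⁺ = Σᵢ x_i⁻ = 0; [x_i⁺, x_j⁺] = [x_i⁻, x_j⁻] = 0 for i ≠ j; [x_i⁺, x_j⁻] = [x_j⁺, x_i⁻] for i ≠ j; and [x_k^±, [x_i⁺, x_j⁻]] = 0 for i,j,k distinct. Then there is a unique Lie algebra homomorphism tₙ → t_{1,n} sending t_{ij} ↦ [x_i⁺, x_j⁻]. -/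

import Mathlib

namespace Stmt9

/-- Index type for the generators `t_{ij}` (`i ≠ j`) of `tₙ`. -/
abbrev TGen (n : ℕ) := {p : Fin n × Fin n // p.1 ≠ p.2}

/-- The generator `t_{ij}` of the free Lie algebra, for `i ≠ j`. -/
noncomputable def T {n : ℕ} (i j : Fin n) (h : i ≠ j) : FreeLieAlgebra ℚ (TGen n) :=
  FreeLieAlgebra.of ℚ (⟨(i, j), h⟩ : TGen n)

/-- The defining relations of `tₙ`: `t_{ji} = t_{ij}`, `[t_{ij}, t_{ik} + t_{jk}] = 0`
for `i,j,k` distinct, `[t_{ij}, t_{kl}] = 0` for `i,j,k,l` distinct. -/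
def tRels (n : ℕ) : Set (FreeLieAlgebra ℚ (TGen n)) :=
  {z | ∃ (i j : Fin n) (h : i ≠ j), z = T j i h.symm - T i j h} ∪
  {z | ∃ (i j k : Fin n) (hij : i ≠ j) (hik : i ≠ k) (hjk : j ≠ k),
      z = ⁅T i j hij, T i k hik + T j k hjk⁆} ∪
  {z | ∃ (i j k l : Fin n) (hij : i ≠ j) (hkl : k ≠ l),
      i ≠ k ∧ i ≠ l ∧ j ≠ k ∧ j ≠ l ∧ z = ⁅T i j hij, T k l hkl⁆}

/-- The Lie ideal generated by the relations of `tₙ`. -/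
noncomputable def tIdeal (n : ℕ) : LieIdeal ℚ (FreeLieAlgebra ℚ (TGen n)) :=
  LieSubmodule.lieSpan ℚ _ (tRels n)

/-- The presented Lie algebra `tₙ`. -/
abbrev tAlg (n : ℕ) := FreeLieAlgebra ℚ (TGen n) ⧸ tIdeal n

/-- The image of the generator `t_{ij}` in `tₙ`. -/
noncomputable def tGen {n : ℕ} (i j : Fin n) (h : i ≠ j) : tAlg n :=
  LieSubmodule.Quotient.mk (N := tIdeal n) (T i j h)

/-- Index type for the generators `x_i⁺` (`(true, i)`) and `x_i⁻` (`(false, i)`)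
of `t_{1,n}`. -/
abbrev XGen (n : ℕ) := Bool × Fin n

/-- The generator `x_i^ε` of the free Lie algebra (`ε = true` means `+`). -/
noncomputable def Xf {n : ℕ} (ε : Bool) (i : Fin n) : FreeLieAlgebra ℚ (XGen n) :=
  FreeLieAlgebra.of ℚ ((ε, i) : XGen n)

/-- The defining relations of `t_{1,n}`: `Σᵢ x_i^± = 0`; `[x_i^±, x_j^±] = 0` for
`i ≠ j`; `[x_i⁺, x_j⁻] = [x_j⁺, x_i⁻]` for `i ≠ j`; `[x_k^±, [x_i⁺, x_j⁻]] = 0`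
for `i,j,k` distinct. -/
def t1Rels (n : ℕ) : Set (FreeLieAlgebra ℚ (XGen n)) :=
  {z | ∃ ε : Bool, z = ∑ i : Fin n, Xf ε i} ∪
  {z | ∃ (ε : Bool) (i j : Fin n), i ≠ j ∧ z = ⁅Xf ε i, Xf ε j⁆} ∪
  {z | ∃ (i j : Fin n), i ≠ j ∧ z = ⁅Xf true i, Xf false j⁆ - ⁅Xf true j, Xf false i⁆} ∪
  {z | ∃ (ε : Bool) (i j k : Fin n), i ≠ j ∧ i ≠ k ∧ j ≠ k ∧
      z = ⁅Xf ε k, ⁅Xf true i, Xf false j⁆⁆}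

/-- The Lie ideal generated by the relations of `t_{1,n}`. -/
noncomputable def t1Ideal (n : ℕ) : LieIdeal ℚ (FreeLieAlgebra ℚ (XGen n)) :=
  LieSubmodule.lieSpan ℚ _ (t1Rels n)

/-- The presented Lie algebra `t_{1,n}`. -/
abbrev t1Alg (n : ℕ) := FreeLieAlgebra ℚ (XGen n) ⧸ t1Ideal n

/-- The image of the generator `x_i^ε` in `t_{1,n}`. -/
noncomputable def xGen {n : ℕ} (ε : Bool) (i : Fin n) : t1Alg n :=
  LieSubmodule.Quotient.mk (N := t1Ideal n) (Xf ε i)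

/-- relation: the sum of the generators vanishes. -/
lemma xGen_sum {n : ℕ} (ε : Bool) : ∑ i : Fin n, xGen ε i = 0 := by
  have h : (∑ i : Fin n, Xf ε i) ∈ t1Ideal n :=
    LieSubmodule.subset_lieSpan (Or.inl (Or.inl (Or.inl ⟨ε, rfl⟩)))
  have : (LieSubmodule.Quotient.mk (N := t1Ideal n) (∑ i : Fin n, Xf ε i) : t1Alg n) = 0 :=
    (LieSubmodule.Quotient.mk_eq_zero' ).mpr h
  rw [← this]
  simp only [xGen]
  exact (map_sum ((t1Ideal n).toSubmodule.mkQ) _ _).symm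

lemma xGen_same {n : ℕ} (ε : Bool) {i j : Fin n} (hij : i ≠ j) :
    ⁅xGen ε i, xGen ε j⁆ = 0 := by
  have h : ⁅Xf ε i, Xf ε j⁆ ∈ t1Ideal n :=
    LieSubmodule.subset_lieSpan (Or.inl (Or.inl (Or.inr ⟨ε, i, j, hij, rfl⟩)))
  exact (LieSubmodule.Quotient.mk_eq_zero').mpr h

lemma xGen_symm {n : ℕ} {i j : Fin n} (hij : i ≠ j) :
    ⁅xGen true i, xGen false j⁆ = ⁅xGen true j, xGen false i⁆ := by
  have h : (⁅Xf true i, Xf false j⁆ - ⁅Xf true j, Xf false i⁆) ∈ t1Ideal n :=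
    LieSubmodule.subset_lieSpan (Or.inl (Or.inr ⟨i, j, hij, rfl⟩))
  exact (Submodule.Quotient.eq (t1Ideal n).toSubmodule).mpr h

lemma xGen_cent {n : ℕ} (ε : Bool) {i j k : Fin n} (hij : i ≠ j) (hik : i ≠ k)
    (hjk : j ≠ k) : ⁅xGen ε k, ⁅xGen true i, xGen false j⁆⁆ = 0 := by
  have h : ⁅Xf ε k, ⁅Xf true i, Xf false j⁆⁆ ∈ t1Ideal n :=
    LieSubmodule.subset_lieSpan (Or.inr ⟨ε, i, j, k, hij, hik, hjk, rfl⟩)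
  exact (LieSubmodule.Quotient.mk_eq_zero').mpr h

lemma xGen_cent' {n : ℕ} (ε : Bool) {i j k : Fin n} (hij : i ≠ j) (hik : i ≠ k)
    (hjk : j ≠ k) : ⁅⁅xGen true i, xGen false j⁆, xGen ε k⁆ = 0 := by
  rw [← lie_skew, xGen_cent ε hij hik hjk, neg_zero]

/-- The lift of `t_{ij} ↦ [x_i⁺,x_j⁻]` to the free Lie algebra. -/
noncomputable def Fmap (n : ℕ) : FreeLieAlgebra ℚ (TGen n) →ₗ⁅ℚ⁆ t1Alg n :=
  FreeLieAlgebra.lift ℚ (fun p => ⁅xGen true p.1.1, xGen false p.1.2⁆)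

lemma Fmap_T {n : ℕ} (i j : Fin n) (h : i ≠ j) :
    Fmap n (T i j h) = ⁅xGen true i, xGen false j⁆ :=
  FreeLieAlgebra.lift_of_apply _ _

lemma aux_sum {n : ℕ} {i j : Fin n} (hij : i ≠ j) :
    ⁅⁅xGen true i, xGen false j⁆, xGen true i⁆ +
      ⁅⁅xGen true i, xGen false j⁆, xGen true j⁆ = 0 := by
  set A := ⁅xGen true i, xGen false j⁆ with hA
  have hzero : ∀ m : Fin n, m ≠ i → m ≠ j → ⁅A, xGen true m⁆ = 0 := by
    intro m hmi hmj
    exact xGen_cent' true hij hmi.symm hmj.symm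
  have hsum : ∑ m : Fin n, ⁅A, xGen true m⁆ = 0 := by
    have := (map_sum (LieAlgebra.ad ℚ (t1Alg n) A) (fun m => xGen true m) Finset.univ).symm
    simp only [LieAlgebra.ad_apply] at this
    rw [this, xGen_sum, lie_zero]
  calc ⁅A, xGen true i⁆ + ⁅A, xGen true j⁆
      = ∑ m ∈ ({i, j} : Finset (Fin n)), ⁅A, xGen true m⁆ := by
        rw [Finset.sum_pair hij]
    _ = ∑ m : Fin n, ⁅A, xGen true m⁆ := by
        refine Finset.sum_subset (Finset.subset_univ _) ?_
        intro m _ hm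
        simp only [Finset.mem_insert, Finset.mem_singleton, not_or] at hm
        exact hzero m hm.1 hm.2
    _ = 0 := hsum

lemma tIdeal_le_ker (n : ℕ) : tIdeal n ≤ (Fmap n).ker := by
  rw [tIdeal, LieSubmodule.lieSpan_le]
  rintro z ((⟨i, j, h, rfl⟩ | ⟨i, j, k, hij, hik, hjk, rfl⟩) |
    ⟨i, j, k, l, hij, hkl, hik, hil, hjk, hjl, rfl⟩) <;> simp only [SetLike.mem_coe, LieHom.mem_ker]
  · rw [map_sub, Fmap_T, Fmap_T, xGen_symm h.symm, sub_self]
  · rw [LieHom.map_lie, map_add, Fmap_T, Fmap_T, Fmap_T]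
    set A := ⁅xGen true i, xGen false j⁆ with hA
    have hAk : ∀ ε : Bool, ⁅A, xGen ε k⁆ = 0 := fun ε => xGen_cent' ε hij hik hjk
    have e1 : ⁅A, ⁅xGen true i, xGen false k⁆⁆ = ⁅⁅A, xGen true i⁆, xGen false k⁆ := by
      rw [leibniz_lie, hAk false, lie_zero, add_zero]
    have e2 : ⁅A, ⁅xGen true j, xGen false k⁆⁆ = ⁅⁅A, xGen true j⁆, xGen false k⁆ := by
      rw [leibniz_lie, hAk false, lie_zero, add_zero]
    rw [lie_add, e1, e2, ← add_lie, aux_sum hij, zero_lie]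
  · rw [LieHom.map_lie, Fmap_T, Fmap_T]
    set A := ⁅xGen true i, xGen false j⁆ with hA
    rw [leibniz_lie, xGen_cent' true hij hik hjk, xGen_cent' false hij hil hjl,
      lie_zero, zero_lie, add_zero]

/-- The quotient map as a Lie hom. -/
noncomputable def mkHom (n : ℕ) : FreeLieAlgebra ℚ (TGen n) →ₗ⁅ℚ⁆ tAlg n :=
  { (tIdeal n).toSubmodule.mkQ with
    map_lie' := fun {_ _} => rfl }

lemma mkHom_apply {n : ℕ} (x : FreeLieAlgebra ℚ (TGen n)) :
    mkHom n x = LieSubmodule.Quotient.mk (N := tIdeal n) x := rfl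

/-- The induced map `tₙ → t_{1,n}`. -/
noncomputable def phi (n : ℕ) : tAlg n →ₗ⁅ℚ⁆ t1Alg n :=
  { (tIdeal n).toSubmodule.liftQ (Fmap n).toLinearMap
      (fun x hx => LieHom.mem_ker.mp (tIdeal_le_ker n hx)) with
    map_lie' := by
      intro x y
      obtain ⟨a, rfl⟩ := Submodule.Quotient.mk_surjective _ x
      obtain ⟨b, rfl⟩ := Submodule.Quotient.mk_surjective _ y
      show (tIdeal n).toSubmodule.liftQ (Fmap n).toLinearMap _
          (⁅(LieSubmodule.Quotient.mk (N := tIdeal n) a : tAlg n),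
            (LieSubmodule.Quotient.mk (N := tIdeal n) b : tAlg n)⁆) = _
      rw [← LieSubmodule.Quotient.mk_bracket]
      show (tIdeal n).toSubmodule.liftQ (Fmap n).toLinearMap _
        (Submodule.Quotient.mk ⁅a, b⁆) = _
      erw [Submodule.liftQ_apply]
      show Fmap n ⁅a, b⁆ = _
      rw [LieHom.map_lie]
      rfl }

lemma phi_mk {n : ℕ} (x : FreeLieAlgebra ℚ (TGen n)) :
    phi n (LieSubmodule.Quotient.mk (N := tIdeal n) x) = Fmap n x :=
  Submodule.liftQ_apply _ _ _

/-- There is a unique Lie algebra homomorphism `tₙ → t_{1,n}` sending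
`t_{ij} ↦ [x_i⁺, x_j⁻]`. -/
theorem stmt9 (n : ℕ) (hn : 2 ≤ n) :
    ∃! φ : tAlg n →ₗ⁅ℚ⁆ t1Alg n,
      ∀ (i j : Fin n) (h : i ≠ j), φ (tGen i j h) = ⁅xGen true i, xGen false j⁆ := by
  refine ⟨phi n, ?_, ?_⟩
  · intro i j h
    rw [tGen, phi_mk, Fmap_T]
  · intro ψ hψ
    have key : ψ.comp (mkHom n) = (phi n).comp (mkHom n) := by
      apply FreeLieAlgebra.hom_ext
      intro x
      obtain ⟨⟨i, j⟩, h⟩ := x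
      show ψ (mkHom n (T i j h)) = phi n (mkHom n (T i j h))
      rw [mkHom_apply]
      show ψ (tGen i j h) = phi n (tGen i j h)
      rw [hψ i j h, tGen, phi_mk, Fmap_T]
    ext x
    obtain ⟨a, rfl⟩ := Submodule.Quotient.mk_surjective _ x
    exact LieHom.congr_fun key a

end Stmt9
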